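/- Let x, y ∈ ℝ³ be unit vectors with r := arccos⟨x,y⟩ satisfying 0 < r < π, and set e₁^x = (sin r)⁻¹ • (y − cos r • x) and e₁^y = (sin r)⁻¹ • (cos r • y − x). Let γx, γy : ℝ → ℝ³ be curves taking values in the unit sphere (‖γx(t)‖ = ‖γy(t)‖ = 1 for all t), differentiable at 0, with γx(0) = x, γy(0) = y, γx'(0) = u and γy'(0) = v. Then the function t ↦ arccos⟨γx(t), γy(t)⟩ is differentiable at 0 with derivative ⟨v, e₁^y⟩ − ⟨u, e₁^x⟩. -/

import Mathlib

/-- First variation of the spherical distance: for unit vectors `x, y ∈ ℝ³`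
at spherical distance `r = arccos⟨x,y⟩ ∈ (0,π)`, and unit-sphere-valued curves `γx, γy`
through `x, y` with velocities `u, v` at time `0`, the function
`t ↦ arccos⟨γx t, γy t⟩` has derivative `⟨v, e₁^y⟩ − ⟨u, e₁^x⟩` at `0`, where
`e₁^x = (sin r)⁻¹ • (y − cos r • x)` and `e₁^y = (sin r)⁻¹ • (cos r • y − x)`. -/
theorem spherical_distance_first_variation
    (x y u v : EuclideanSpace ℝ (Fin 3)) (hx : ‖x‖ = 1) (hy : ‖y‖ = 1)
    (r : ℝ) (hr : r = Real.arccos (inner ℝ x y))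
    (hr0 : 0 < r) (hrπ : r < Real.pi)
    (e1x e1y : EuclideanSpace ℝ (Fin 3))
    (he1x : e1x = (Real.sin r)⁻¹ • (y - Real.cos r • x))
    (he1y : e1y = (Real.sin r)⁻¹ • (Real.cos r • y - x))
    (γx γy : ℝ → EuclideanSpace ℝ (Fin 3))
    (hγx1 : ∀ t, ‖γx t‖ = 1) (hγy1 : ∀ t, ‖γy t‖ = 1)
    (hγx0 : γx 0 = x) (hγy0 : γy 0 = y)
    (hu : HasDerivAt γx u 0) (hv : HasDerivAt γy v 0) :
    HasDerivAt (fun t => Real.arccos (inner ℝ (γx t) (γy t)))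
      ((inner ℝ v e1y : ℝ) - (inner ℝ u e1x : ℝ)) 0 := by
  have habs : |(inner ℝ x y : ℝ)| ≤ 1 := by
    have := abs_real_inner_le_norm x y
    simpa [hx, hy] using this
  have hcos : Real.cos r = inner ℝ x y := by
    rw [hr, Real.cos_arccos (by linarith [abs_le.1 habs]) (by linarith [abs_le.1 habs])]
  have hsinpos : 0 < Real.sin r := Real.sin_pos_of_pos_of_lt_pi hr0 hrπ
  have hsin : Real.sin r = Real.sqrt (1 - Real.cos r ^ 2) := by
    rw [Real.sin_eq_sqrt_one_sub_cos_sq hr0.le hrπ.le]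
  have hc1 : (inner ℝ x y : ℝ) ≠ 1 := by
    intro h
    have : Real.cos r < Real.cos 0 := Real.cos_lt_cos_of_nonneg_of_le_pi le_rfl hrπ.le hr0
    rw [hcos, h, Real.cos_zero] at this; exact lt_irrefl _ this
  have hcm1 : (inner ℝ x y : ℝ) ≠ -1 := by
    intro h
    have : Real.cos Real.pi < Real.cos r := Real.cos_lt_cos_of_nonneg_of_le_pi hr0.le le_rfl hrπ
    rw [hcos, h, Real.cos_pi] at this; exact lt_irrefl _ this
  -- orthogonality of velocities
  have hux : (inner ℝ u x : ℝ) = 0 := by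
    have h1 : HasDerivAt (fun t => (inner ℝ (γx t) (γx t) : ℝ))
        ((inner ℝ (γx 0) u : ℝ) + (inner ℝ u (γx 0) : ℝ)) 0 := hu.inner ℝ hu
    have h2 : (fun t => (inner ℝ (γx t) (γx t) : ℝ)) = fun _ => (1 : ℝ) := by
      funext t
      rw [real_inner_self_eq_norm_sq, hγx1 t]; norm_num
    rw [h2] at h1
    have := h1.unique (hasDerivAt_const 0 1)
    rw [hγx0] at this
    linarith [real_inner_comm x u, real_inner_comm y v]
  have hvy : (inner ℝ v y : ℝ) = 0 := by
    have h1 : HasDerivAt (fun t => (inner ℝ (γy t) (γy t) : ℝ))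
        ((inner ℝ (γy 0) v : ℝ) + (inner ℝ v (γy 0) : ℝ)) 0 := hv.inner ℝ hv
    have h2 : (fun t => (inner ℝ (γy t) (γy t) : ℝ)) = fun _ => (1 : ℝ) := by
      funext t
      rw [real_inner_self_eq_norm_sq, hγy1 t]; norm_num
    rw [h2] at h1
    have := h1.unique (hasDerivAt_const 0 1)
    rw [hγy0] at this
    linarith [real_inner_comm x u, real_inner_comm y v]
  have hinner : HasDerivAt (fun t => (inner ℝ (γx t) (γy t) : ℝ))
      ((inner ℝ (γx 0) v : ℝ) + (inner ℝ u (γy 0) : ℝ)) 0 := hu.inner ℝ hv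
  rw [hγx0, hγy0] at hinner
  have harccos : HasDerivAt Real.arccos (-(1 / Real.sqrt (1 - (inner ℝ x y : ℝ) ^ 2)))
      ((fun t => (inner ℝ (γx t) (γy t) : ℝ)) 0) := by
    simpa [hγx0, hγy0] using Real.hasDerivAt_arccos hcm1 hc1
  have hcomp := harccos.comp 0 hinner
  refine hcomp.congr_deriv ?_
  symm
  rw [he1x, he1y, ← hcos, ← hsin]
  rw [real_inner_smul_right, real_inner_smul_right, inner_sub_right, inner_sub_right,
    real_inner_smul_right, real_inner_smul_right, hvy, hux,
    real_inner_comm x v]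
  field_simp
  ring
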